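/- arXiv:1606.08939 — 2 statements merged into one kernel-verified Lean document; each statement's English description precedes it below -/
import Mathlib

section
/- Let F ∈ ℕ, η > 0, L > 0, and let G = (V, E) be a directed graph on a finite vertex set that is (F+1, F+1)-robust. Let A ⊆ V with |A| ≤ F be a set of malicious adversarial nodes and R = V ∖ A the regular nodes, each regular node i holding a convex function f_i : ℝ → ℝ all of whose subgradients are bounded in magnitude by L. Suppose the regular nodes run the LF dynamics with parameter F in the malicious (broadcast) model with weights lower bounded by η, and the nonnegative step-sizes satisfy α_t → 0. Then the regular nodes reach consensus: max_{i∈R} x_i(t) − min_{i∈R} x_i(t) → 0 as t → ∞, regardless of the adversarial nodes' values, the initial values, and the local functions. -/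
open Filter
open scoped Classical

/-- The in-neighborhood of `v` in the directed graph with edge relation `E`
(`E u v` means there is an edge from `u` to `v`). -/
noncomputable def NIn {V : Type*} [Fintype V] (E : V → V → Prop) (v : V) : Finset V :=
  Finset.univ.filter (fun u => E u v)

/-- A set `S` is `r`-reachable if some vertex of `S` has at least `r` in-neighbors outside `S`. -/
def RReachable {V : Type*} [Fintype V] (E : V → V → Prop) (r : ℕ) (S : Finset V) : Prop :=
  ∃ v ∈ S, r ≤ ((NIn E v) \ S).card

/-- A directed graph is `r`-robust if for every pair of disjoint nonempty vertex subsets,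
at least one of them is `r`-reachable. -/
def RRobust {V : Type*} [Fintype V] (E : V → V → Prop) (r : ℕ) : Prop :=
  ∀ S₁ S₂ : Finset V, S₁.Nonempty → S₂.Nonempty → Disjoint S₁ S₂ →
    RReachable E r S₁ ∨ RReachable E r S₂

/-- A directed graph is `(r,s)`-robust if for every pair of disjoint nonempty vertex
subsets `S₁, S₂`, either every node of `S₁` has at least `r` in-neighbors outside `S₁`,
or every node of `S₂` has at least `r` in-neighbors outside `S₂`, or at least `s` nodes
of `S₁ ∪ S₂` have at least `r` in-neighbors outside their respective sets. -/
def RSRobust {V : Type*} [Fintype V] (E : V → V → Prop) (r s : ℕ) : Prop :=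
  ∀ S₁ S₂ : Finset V, S₁.Nonempty → S₂.Nonempty → Disjoint S₁ S₂ →
    (∀ v ∈ S₁, r ≤ ((NIn E v) \ S₁).card) ∨
    (∀ v ∈ S₂, r ≤ ((NIn E v) \ S₂).card) ∨
    s ≤ ((S₁.filter (fun v => r ≤ ((NIn E v) \ S₁).card)) ∪
         (S₂.filter (fun v => r ≤ ((NIn E v) \ S₂).card))).card

/-- `d` is a subgradient of `f` at `x`. -/
def IsSubgradient (f : ℝ → ℝ) (x d : ℝ) : Prop :=
  ∀ y, f x + d * (y - x) ≤ f y

/-- All subgradients of `f` are bounded in magnitude by `L`. -/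
def HasBoundedSubgradients (f : ℝ → ℝ) (L : ℝ) : Prop :=
  ∀ x d, IsSubgradient f x d → |d| ≤ L

/-- `J` is an admissible LF-retained set with parameter `F` for the values `ξ` on the
in-neighborhood `N`, relative to the node's own value `xi`:  `J = N \ (H ∪ L)` where `H`
consists of (at most) the `F` largest received values strictly greater than `xi` (all of
them if there are fewer than `F`), and symmetrically `L` consists of (at most) the `F`
smallest received values strictly less than `xi`. -/
def IsLFRetained {ι : Type*} [DecidableEq ι] (F : ℕ) (N : Finset ι) (ξ : ι → ℝ)
    (xi : ℝ) (J : Finset ι) : Prop :=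
  ∃ H L : Finset ι,
    J = N \ (H ∪ L) ∧
    H ⊆ N.filter (fun j => xi < ξ j) ∧
    (∀ j ∈ H, ∀ k ∈ (N.filter (fun j => xi < ξ j)) \ H, ξ k ≤ ξ j) ∧
    ((N.filter (fun j => xi < ξ j)).card ≤ F → H = N.filter (fun j => xi < ξ j)) ∧
    (F < (N.filter (fun j => xi < ξ j)).card → H.card = F) ∧
    L ⊆ N.filter (fun j => ξ j < xi) ∧
    (∀ j ∈ L, ∀ k ∈ (N.filter (fun j => ξ j < xi)) \ L, ξ j ≤ ξ k) ∧
    ((N.filter (fun j => ξ j < xi)).card ≤ F → L = N.filter (fun j => ξ j < xi)) ∧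
    (F < (N.filter (fun j => ξ j < xi)).card → L.card = F)

/-- The LF dynamics with parameter `F` in the malicious (broadcast) model: at each
time-step, each regular node `i ∈ R` filters the values of its in-neighbors (the same
broadcast values `x t j` for all receivers), forms a convex combination of its own value
and the retained values with weights lower bounded by `η`, and takes a subgradient step
of its local function `f i` with step-size `α t`. -/
def LFMalicious {V : Type*} [Fintype V] [DecidableEq V] (E : V → V → Prop) (F : ℕ)
    (η : ℝ) (R : Finset V) (f : V → ℝ → ℝ) (α : ℕ → ℝ) (x : ℕ → V → ℝ) : Prop :=
  ∀ t : ℕ, ∀ i ∈ R, ∃ (J : Finset V) (a : V → ℝ) (d : ℝ),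
    IsLFRetained F (NIn E i) (x t) (x t i) J ∧
    (∀ j ∈ insert i J, η ≤ a j) ∧
    a i + ∑ j ∈ J, a j = 1 ∧
    IsSubgradient (f i) (a i * x t i + ∑ j ∈ J, a j * x t j) d ∧
    x (t + 1) i = (a i * x t i + ∑ j ∈ J, a j * x t j) - α t * d

/-- The LF dynamics with parameter `F` in the Byzantine model: `χ t i j` is the value
received by node `i` from its in-neighbor `j` at time `t` (equal to the true state
`x t j` whenever `j` is regular, arbitrary otherwise); each regular node filters the
received values, forms a convex combination with weights lower bounded by `η`, and takes
a subgradient step of its local function. -/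
def LFByzantine {V : Type*} [Fintype V] [DecidableEq V] (E : V → V → Prop) (F : ℕ)
    (η : ℝ) (R : Finset V) (f : V → ℝ → ℝ) (α : ℕ → ℝ) (x : ℕ → V → ℝ)
    (χ : ℕ → V → V → ℝ) : Prop :=
  (∀ t : ℕ, ∀ i ∈ R, ∀ j ∈ R, χ t i j = x t j) ∧
  ∀ t : ℕ, ∀ i ∈ R, ∃ (J : Finset V) (a : V → ℝ) (d : ℝ),
    IsLFRetained F (NIn E i) (χ t i) (x t i) J ∧
    (∀ j ∈ insert i J, η ≤ a j) ∧
    a i + ∑ j ∈ J, a j = 1 ∧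
    IsSubgradient (f i) (a i * x t i + ∑ j ∈ J, a j * χ t i j) d ∧
    x (t + 1) i = (a i * x t i + ∑ j ∈ J, a j * χ t i j) - α t * d


section Aux
variable {V : Type*} [DecidableEq V]

lemma IsLFRetained.neg {F : ℕ} {N : Finset V} {ξ : V → ℝ} {xi : ℝ} {J : Finset V}
    (h : IsLFRetained F N ξ xi J) :
    IsLFRetained F N (fun j => -ξ j) (-xi) J := by
  obtain ⟨H, Lo, hJ, h1, h2, h3, h4, h5, h6, h7, h8⟩ := h
  have e1 : N.filter (fun j => -xi < -ξ j) = N.filter (fun j => ξ j < xi) :=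
    Finset.filter_congr (fun j _ => by simp)
  have e2 : N.filter (fun j => -ξ j < -xi) = N.filter (fun j => xi < ξ j) :=
    Finset.filter_congr (fun j _ => by simp)
  refine ⟨Lo, H, by rw [hJ, Finset.union_comm], ?_, ?_, ?_, ?_, ?_, ?_, ?_, ?_⟩
  · rw [e1]; exact h5
  · rw [e1]; intro j hj k hk; simpa using h6 j hj k hk
  · rw [e1]; exact h7
  · rw [e1]; exact h8
  · rw [e2]; exact h1
  · rw [e2]; intro j hj k hk; simpa using h2 j hj k hk
  · rw [e2]; exact h3
  · rw [e2]; exact h4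

lemma retained_le {F : ℕ} {N : Finset V} {ξ : V → ℝ} {xi : ℝ} {J : Finset V}
    (h : IsLFRetained F N ξ xi J) (B : Finset V) (hB : B.card ≤ F)
    (Mv : ℝ) (hxi : xi ≤ Mv) (hreg : ∀ j ∈ N, j ∉ B → ξ j ≤ Mv) :
    ∀ j ∈ J, ξ j ≤ Mv := by
  obtain ⟨H, Lo, hJ, hHsub, hHmax, hHall, hHcard, hLsub, hLmin, hLall, hLcard⟩ := h
  intro j hj
  by_contra hgt
  push_neg at hgt
  subst hJ
  rw [Finset.mem_sdiff, Finset.mem_union] at hj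
  push_neg at hj
  obtain ⟨hjN, hjH, hjL⟩ := hj
  have hjP : j ∈ N.filter (fun j => xi < ξ j) :=
    Finset.mem_filter.2 ⟨hjN, lt_of_le_of_lt hxi hgt⟩
  have hcard : F < (N.filter (fun j => xi < ξ j)).card := by
    by_contra hle
    push_neg at hle
    exact hjH (hHall hle ▸ hjP)
  have hHF : H.card = F := hHcard hcard
  have hHB : ∀ h' ∈ H, h' ∈ B := by
    intro h' hh'
    by_contra hnB
    have hh'N : h' ∈ N := (Finset.mem_filter.1 (hHsub hh')).1
    have hjk := hHmax h' hh' j (Finset.mem_sdiff.2 ⟨hjP, hjH⟩)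
    exact absurd (hreg h' hh'N hnB) (not_le.2 (lt_of_lt_of_le hgt hjk))
  have hjB : j ∈ B := by
    by_contra hnB; exact absurd (hreg j hjN hnB) (not_le.2 hgt)
  have hsub : insert j H ⊆ B := by
    intro v hv
    rcases Finset.mem_insert.1 hv with rfl | hv
    · exact hjB
    · exact hHB v hv
  have hcard2 : F + 1 ≤ B.card := by
    calc F + 1 = (insert j H).card := by
          rw [Finset.card_insert_of_notMem hjH, hHF]
      _ ≤ B.card := Finset.card_le_card hsub
  omega

lemma retained_ge {F : ℕ} {N : Finset V} {ξ : V → ℝ} {xi : ℝ} {J : Finset V}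
    (h : IsLFRetained F N ξ xi J) (B : Finset V) (hB : B.card ≤ F)
    (mv : ℝ) (hxi : mv ≤ xi) (hreg : ∀ j ∈ N, j ∉ B → mv ≤ ξ j) :
    ∀ j ∈ J, mv ≤ ξ j := by
  intro j hj
  have := retained_le h.neg B hB (-mv) (neg_le_neg hxi)
    (fun j hj hB => neg_le_neg (hreg j hj hB)) j hj
  simpa using this

lemma exists_retained_outside {F : ℕ} {N : Finset V} {ξ : V → ℝ} {xi : ℝ} {J : Finset V}
    (h : IsLFRetained F N ξ xi J) (C : Finset V)
    (hcard : F + 1 ≤ (N \ C).card)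
    (hlt : ∀ j ∈ N \ C, ξ j < xi) :
    ∃ j ∈ J, j ∉ C := by
  obtain ⟨H, Lo, hJ, hHsub, hHmax, hHall, hHcard, hLsub, hLmin, hLall, hLcard⟩ := h
  have hLoF : Lo.card ≤ F := by
    rcases le_or_gt (N.filter (fun j => ξ j < xi)).card F with hle | hlt'
    · rw [hLall hle]; exact hle
    · exact (hLcard hlt').le
  have hne : ((N \ C) \ Lo).Nonempty := by
    rw [← Finset.card_pos]
    have := Finset.le_card_sdiff Lo (N \ C)
    have h2 : (N \ C).card - Lo.card ≤ ((N \ C) \ Lo).card := Finset.le_card_sdiff Lo (N \ C)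
    omega
  obtain ⟨j, hj⟩ := hne
  rw [Finset.mem_sdiff, Finset.mem_sdiff] at hj
  obtain ⟨⟨hjN, hjC⟩, hjLo⟩ := hj
  refine ⟨j, ?_, hjC⟩
  rw [hJ, Finset.mem_sdiff, Finset.mem_union]
  refine ⟨hjN, ?_⟩
  push_neg
  constructor
  · intro hjH
    have := (Finset.mem_filter.1 (hHsub hjH)).2
    exact absurd (hlt j (Finset.mem_sdiff.2 ⟨hjN, hjC⟩)) (not_lt.2 this.le)
  · exact hjLo

lemma exists_retained_outside' {F : ℕ} {N : Finset V} {ξ : V → ℝ} {xi : ℝ} {J : Finset V}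
    (h : IsLFRetained F N ξ xi J) (C : Finset V)
    (hcard : F + 1 ≤ (N \ C).card)
    (hgt : ∀ j ∈ N \ C, xi < ξ j) :
    ∃ j ∈ J, j ∉ C :=
  exists_retained_outside h.neg C hcard (fun j hj => neg_lt_neg (hgt j hj))

end Aux

section Combo
variable {V : Type*} [DecidableEq V]

lemma combo_le {J : Finset V} {a ξ : V → ℝ} {i : V} {η : ℝ} (hη : 0 ≤ η)
    (hw : ∀ j ∈ insert i J, η ≤ a j) (hsum : a i + ∑ j ∈ J, a j = 1)
    (Mv : ℝ) (hvi : ξ i ≤ Mv) (hvJ : ∀ j ∈ J, ξ j ≤ Mv) :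
    a i * ξ i + ∑ j ∈ J, a j * ξ j ≤ Mv := by
  have hai : 0 ≤ a i := le_trans hη (hw i (Finset.mem_insert_self i J))
  have haj : ∀ j ∈ J, 0 ≤ a j :=
    fun j hj => le_trans hη (hw j (Finset.mem_insert_of_mem hj))
  have h1 : a i * ξ i ≤ a i * Mv := mul_le_mul_of_nonneg_left hvi hai
  have h2 : ∑ j ∈ J, a j * ξ j ≤ ∑ j ∈ J, a j * Mv :=
    Finset.sum_le_sum (fun j hj => mul_le_mul_of_nonneg_left (hvJ j hj) (haj j hj))
  have h3 : ∑ j ∈ J, a j * Mv = (∑ j ∈ J, a j) * Mv := by rw [Finset.sum_mul]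
  have h4 : a i * Mv + (∑ j ∈ J, a j) * Mv = Mv := by rw [← add_mul, hsum, one_mul]
  linarith

lemma combo_ge {J : Finset V} {a ξ : V → ℝ} {i : V} {η : ℝ} (hη : 0 ≤ η)
    (hw : ∀ j ∈ insert i J, η ≤ a j) (hsum : a i + ∑ j ∈ J, a j = 1)
    (mv : ℝ) (hvi : mv ≤ ξ i) (hvJ : ∀ j ∈ J, mv ≤ ξ j) :
    mv ≤ a i * ξ i + ∑ j ∈ J, a j * ξ j := by
  have := combo_le (ξ := fun j => -ξ j) hη hw hsum (-mv) (neg_le_neg hvi)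
    (fun j hj => neg_le_neg (hvJ j hj))
  simp only [mul_neg, ← neg_add, Finset.sum_neg_distrib] at this
  linarith

lemma combo_le' {J : Finset V} {a ξ : V → ℝ} {i : V} {η : ℝ} (hη : 0 ≤ η)
    (hw : ∀ j ∈ insert i J, η ≤ a j) (hsum : a i + ∑ j ∈ J, a j = 1)
    (Mv T : ℝ) (hT : T ≤ Mv) (hvi : ξ i ≤ Mv) (hvJ : ∀ j ∈ J, ξ j ≤ Mv)
    (j₀ : V) (hj₀ : j₀ ∈ insert i J) (hj₀T : ξ j₀ ≤ T) :
    a i * ξ i + ∑ j ∈ J, a j * ξ j ≤ (1 - η) * Mv + η * T := by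
  have hai : 0 ≤ a i := le_trans hη (hw i (Finset.mem_insert_self i J))
  have haj : ∀ j ∈ J, 0 ≤ a j :=
    fun j hj => le_trans hη (hw j (Finset.mem_insert_of_mem hj))
  rcases Finset.mem_insert.1 hj₀ with rfl | hj₀J
  · -- j₀ = i
    have h1 : a j₀ * ξ j₀ ≤ a j₀ * T := mul_le_mul_of_nonneg_left hj₀T hai
    have h2 : ∑ j ∈ J, a j * ξ j ≤ ∑ j ∈ J, a j * Mv :=
      Finset.sum_le_sum (fun j hj => mul_le_mul_of_nonneg_left (hvJ j hj) (haj j hj))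
    have h3 : ∑ j ∈ J, a j * Mv = (∑ j ∈ J, a j) * Mv := by rw [Finset.sum_mul]
    have hη' : η ≤ a j₀ := hw j₀ (Finset.mem_insert_self j₀ J)
    have hexp : (∑ j ∈ J, a j) * Mv = (1 - a j₀) * Mv := by
      rw [show (∑ j ∈ J, a j) = 1 - a j₀ from by linarith]
    have key : a j₀ * T + (1 - a j₀) * Mv ≤ (1 - η) * Mv + η * T := by
      nlinarith [mul_nonneg (sub_nonneg.2 hη') (sub_nonneg.2 hT)]
    linarith
  · -- j₀ ∈ J
    have hsplit : ∑ j ∈ J, a j * ξ j = (∑ j ∈ J.erase j₀, a j * ξ j) + a j₀ * ξ j₀ :=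
      (Finset.sum_erase_add J _ hj₀J).symm
    have hsplit2 : ∑ j ∈ J, a j = (∑ j ∈ J.erase j₀, a j) + a j₀ :=
      (Finset.sum_erase_add J _ hj₀J).symm
    have h1 : a j₀ * ξ j₀ ≤ a j₀ * T := mul_le_mul_of_nonneg_left hj₀T (haj j₀ hj₀J)
    have h2 : ∑ j ∈ J.erase j₀, a j * ξ j ≤ ∑ j ∈ J.erase j₀, a j * Mv :=
      Finset.sum_le_sum (fun j hj =>
        mul_le_mul_of_nonneg_left (hvJ j (Finset.mem_of_mem_erase hj))
          (haj j (Finset.mem_of_mem_erase hj)))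
    have h3 : ∑ j ∈ J.erase j₀, a j * Mv = (∑ j ∈ J.erase j₀, a j) * Mv := by
      rw [Finset.sum_mul]
    have h4 : a i * ξ i ≤ a i * Mv := mul_le_mul_of_nonneg_left hvi hai
    have hη' : η ≤ a j₀ := hw j₀ (Finset.mem_insert_of_mem hj₀J)
    have hexp : a i * Mv + (∑ j ∈ J.erase j₀, a j) * Mv = (1 - a j₀) * Mv := by
      rw [← add_mul, show a i + (∑ j ∈ J.erase j₀, a j) = 1 - a j₀ from by linarith]
    have key : a j₀ * T + (1 - a j₀) * Mv ≤ (1 - η) * Mv + η * T := by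
      nlinarith [mul_nonneg (sub_nonneg.2 hη') (sub_nonneg.2 hT)]
    linarith

lemma combo_ge' {J : Finset V} {a ξ : V → ℝ} {i : V} {η : ℝ} (hη : 0 ≤ η)
    (hw : ∀ j ∈ insert i J, η ≤ a j) (hsum : a i + ∑ j ∈ J, a j = 1)
    (mv T : ℝ) (hT : mv ≤ T) (hvi : mv ≤ ξ i) (hvJ : ∀ j ∈ J, mv ≤ ξ j)
    (j₀ : V) (hj₀ : j₀ ∈ insert i J) (hj₀T : T ≤ ξ j₀) :
    (1 - η) * mv + η * T ≤ a i * ξ i + ∑ j ∈ J, a j * ξ j := by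
  have := combo_le' (ξ := fun j => -ξ j) hη hw hsum (-mv) (-T) (neg_le_neg hT)
    (neg_le_neg hvi) (fun j hj => neg_le_neg (hvJ j hj)) j₀ hj₀ (neg_le_neg hj₀T)
  simp only [mul_neg, ← neg_add, Finset.sum_neg_distrib] at this
  linarith

end Combo

lemma tendsto_of_contract {D e : ℕ → ℝ} {c : ℝ} {N : ℕ} (hN : 0 < N)
    (hc0 : 0 ≤ c) (hc1 : c < 1)
    (hD0 : ∀ t, 0 ≤ D t)
    (hrec : ∀ t, D (t + N) ≤ c * D t + e t)
    (he : Tendsto e atTop (nhds 0)) : Tendsto D atTop (nhds 0) := by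
  rw [Metric.tendsto_atTop]
  intro ε hε
  have hq : (0:ℝ) < (1 - c) * ε / 2 := by nlinarith
  obtain ⟨T₀, hT₀⟩ := (Filter.eventually_atTop).1 (he.eventually (gt_mem_nhds hq))
  set B : ℝ := ∑ r ∈ Finset.range N, D (T₀ + r) with hBdef
  have hB : ∀ r < N, D (T₀ + r) ≤ B := by
    intro r hr
    exact Finset.single_le_sum (fun j _ => hD0 (T₀ + j)) (Finset.mem_range.2 hr)
  have hBnn : 0 ≤ B := Finset.sum_nonneg (fun j _ => hD0 (T₀ + j))
  have key : ∀ k, ∀ r < N, D (T₀ + r + k * N) ≤ c ^ k * B + ε / 2 := by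
    intro k
    induction k with
    | zero =>
      intro r hr
      simpa using le_trans (hB r hr) (by linarith)
    | succ k ih =>
      intro r hr
      have hidx : T₀ + r + (k + 1) * N = (T₀ + r + k * N) + N := by ring
      have h1 := hrec (T₀ + r + k * N)
      have h2 := ih r hr
      have h3 : e (T₀ + r + k * N) < (1 - c) * ε / 2 := hT₀ _ (by omega)
      have hpow : c ^ (k + 1) = c ^ k * c := pow_succ c k
      have h4 : c * D (T₀ + r + k * N) ≤ c * (c ^ k * B + ε / 2) :=
        mul_le_mul_of_nonneg_left h2 hc0
      rw [hidx]
      nlinarith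
  have hpb : Tendsto (fun k => c ^ k * B) atTop (nhds 0) := by
    simpa using (tendsto_pow_atTop_nhds_zero_of_lt_one hc0 hc1).mul_const B
  obtain ⟨k₀, hk₀⟩ := (Filter.eventually_atTop).1
    (hpb.eventually (gt_mem_nhds (by linarith : (0:ℝ) < ε / 2)))
  refine ⟨T₀ + (k₀ + 1) * N, fun n hn => ?_⟩
  have hs : T₀ ≤ n := le_trans (Nat.le_add_right _ _) hn
  set s := n - T₀ with hsdef
  have hsN : (k₀ + 1) * N ≤ s := by omega
  have hk : k₀ ≤ s / N := by
    have : k₀ * N ≤ s := le_trans (by nlinarith [hN]) hsN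
    exact (Nat.le_div_iff_mul_le hN).2 this
  have hr : s % N < N := Nat.mod_lt _ hN
  have hdm := Nat.div_add_mod s N
  have hmc : (s / N) * N = N * (s / N) := Nat.mul_comm _ _
  have hn' : n = T₀ + s % N + (s / N) * N := by omega
  have h5 := key (s / N) (s % N) hr
  rw [← hn'] at h5
  have h6 : c ^ (s / N) * B ≤ c ^ k₀ * B :=
    mul_le_mul_of_nonneg_right (pow_le_pow_of_le_one hc0 hc1.le hk) hBnn
  have h7 : c ^ k₀ * B < ε / 2 := hk₀ k₀ le_rfl
  rw [Real.dist_eq, sub_zero, abs_of_nonneg (hD0 n)]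
  linarith

lemma card_sdiff_classical {V : Type*} [DecidableEq V] (s u : Finset V) :
    (@SDiff.sdiff (Finset V)
      (@Finset.instSDiff V (fun a b => Classical.propDecidable (a = b))) s u).card
      = (s \ u).card := by
  congr 1
  ext v
  simp [Finset.mem_sdiff]

lemma exists_regular_mem {V : Type*} (A S : Finset V) (F : ℕ) (hA : A.card ≤ F)
    (hS : F + 1 ≤ S.card) : ∃ v ∈ S, v ∉ A := by
  classical
  by_contra h
  push_neg at h
  have hsub : S ⊆ A := h
  have := Finset.card_le_card hsub
  omega

set_option maxHeartbeats 2000000 in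
lemma contraction {V : Type*} [Fintype V] [DecidableEq V] (F : ℕ) (η L : ℝ)
    (hη : 0 < η) (hη1 : η ≤ 1) (hL : 0 < L) (E : V → V → Prop)
    (hrobust : RSRobust E (F + 1) (F + 1))
    (A : Finset V) (hA : A.card ≤ F) (hR : (Aᶜ : Finset V).Nonempty)
    (f : V → ℝ → ℝ) (hbdd : ∀ i ∈ (Aᶜ : Finset V), HasBoundedSubgradients (f i) L)
    (α : ℕ → ℝ) (hα0 : ∀ t, 0 ≤ α t)
    (x : ℕ → V → ℝ) (hdyn : LFMalicious E F η Aᶜ f α x) (t : ℕ) :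
    (Aᶜ : Finset V).sup' hR (x (t + (Aᶜ : Finset V).card)) -
      (Aᶜ : Finset V).inf' hR (x (t + (Aᶜ : Finset V).card)) ≤
    (1 - η ^ (Aᶜ : Finset V).card / 2) *
      ((Aᶜ : Finset V).sup' hR (x t) - (Aᶜ : Finset V).inf' hR (x t)) +
    3 * (L * ∑ s ∈ Finset.Ico t (t + (Aᶜ : Finset V).card), α s) := by
  set n := (Aᶜ : Finset V).card with hn
  set M0 := (Aᶜ : Finset V).sup' hR (x t) with hM0
  set m0 := (Aᶜ : Finset V).inf' hR (x t) with hm0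
  set Δf : ℕ → ℝ := fun k => L * ∑ s ∈ Finset.Ico t (t + k), α s with hΔf
  have hΔ0 : ∀ k, 0 ≤ Δf k := by
    intro k; simp only [hΔf]
    exact mul_nonneg hL.le (Finset.sum_nonneg fun s _ => hα0 s)
  have hΔsucc : ∀ k, Δf (k + 1) = Δf k + L * α (t + k) := by
    intro k; simp only [hΔf]
    rw [show t + (k+1) = (t + k) + 1 by omega,
      Finset.sum_Ico_succ_top (Nat.le_add_right t k), mul_add]
  have hΔmono : ∀ {k₁ k₂ : ℕ}, k₁ ≤ k₂ → Δf k₁ ≤ Δf k₂ := by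
    intro k₁ k₂ h; simp only [hΔf]
    refine mul_le_mul_of_nonneg_left ?_ hL.le
    exact Finset.sum_le_sum_of_subset_of_nonneg
      (Finset.Ico_subset_Ico le_rfl (by omega)) (fun s _ _ => hα0 s)
  have hΔzero : Δf 0 = 0 := by simp [hΔf]
  -- one-step bounds
  have hstepU : ∀ k (i : V), i ∈ (Aᶜ : Finset V) → ∀ Mv : ℝ,
      x (t+k) i ≤ Mv → (∀ j ∈ (Aᶜ : Finset V), x (t+k) j ≤ Mv) →
      x (t+k+1) i ≤ Mv + L * α (t+k) := by
    intro k i hi Mv hMvi hMvall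
    obtain ⟨J, a, d, hJ, hw, hsum, hsg, hupd⟩ := hdyn (t+k) i hi
    have hvJ : ∀ j ∈ J, x (t+k) j ≤ Mv :=
      retained_le hJ A hA Mv hMvi (fun j _ hjA => hMvall j (Finset.mem_compl.2 hjA))
    have hz := combo_le hη.le hw hsum Mv hMvi hvJ
    have hd := hbdd i hi _ d hsg
    have hd1 : -L ≤ d := by linarith [(abs_le.1 hd).1]
    have hαd : -(L * α (t+k)) ≤ α (t+k) * d := by
      nlinarith [mul_nonneg (hα0 (t+k)) (by linarith : (0:ℝ) ≤ d + L)]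
    rw [hupd]; linarith
  have hstepL : ∀ k (i : V), i ∈ (Aᶜ : Finset V) → ∀ mv : ℝ,
      mv ≤ x (t+k) i → (∀ j ∈ (Aᶜ : Finset V), mv ≤ x (t+k) j) →
      mv - L * α (t+k) ≤ x (t+k+1) i := by
    intro k i hi mv hmvi hmvall
    obtain ⟨J, a, d, hJ, hw, hsum, hsg, hupd⟩ := hdyn (t+k) i hi
    have hvJ : ∀ j ∈ J, mv ≤ x (t+k) j :=
      retained_ge hJ A hA mv hmvi (fun j _ hjA => hmvall j (Finset.mem_compl.2 hjA))
    have hz := combo_ge hη.le hw hsum mv hmvi hvJ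
    have hd := hbdd i hi _ d hsg
    have hd1 : d ≤ L := (abs_le.1 hd).2
    have hαd : α (t+k) * d ≤ L * α (t+k) := by
      nlinarith [mul_nonneg (hα0 (t+k)) (by linarith : (0:ℝ) ≤ L - d)]
    rw [hupd]; linarith
  have hstepUT : ∀ k (i : V), i ∈ (Aᶜ : Finset V) → ∀ Mv T : ℝ, T ≤ Mv →
      x (t+k) i ≤ Mv → (∀ j ∈ (Aᶜ : Finset V), x (t+k) j ≤ Mv) →
      (x (t+k) i ≤ T ∨
        F+1 ≤ ((NIn E i) \ Finset.univ.filter (fun v => T < x (t+k) v)).card) →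
      x (t+k+1) i ≤ (1-η) * Mv + η * T + L * α (t+k) := by
    intro k i hi Mv T hT hMvi hMvall hcase
    obtain ⟨J, a, d, hJ, hw, hsum, hsg, hupd⟩ := hdyn (t+k) i hi
    have hvJ : ∀ j ∈ J, x (t+k) j ≤ Mv :=
      retained_le hJ A hA Mv hMvi (fun j _ hjA => hMvall j (Finset.mem_compl.2 hjA))
    have hz : a i * x (t+k) i + ∑ j ∈ J, a j * x (t+k) j ≤ (1-η)*Mv + η*T := by
      rcases le_or_gt (x (t+k) i) T with hle | hgt
      · exact combo_le' hη.le hw hsum Mv T hT hMvi hvJ i (Finset.mem_insert_self i J) hle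
      · rcases hcase with hle | hreach
        · linarith
        · have hlt : ∀ j ∈ (NIn E i) \ Finset.univ.filter (fun v => T < x (t+k) v),
              x (t+k) j < x (t+k) i := by
            intro j hj
            rw [Finset.mem_sdiff] at hj
            have hnot : ¬ T < x (t+k) j := fun hTj =>
              hj.2 (Finset.mem_filter.2 ⟨Finset.mem_univ j, hTj⟩)
            exact lt_of_le_of_lt (not_lt.1 hnot) hgt
          obtain ⟨j₀, hj₀J, hj₀C⟩ := exists_retained_outside hJ _ hreach hlt
          have hj₀T : x (t+k) j₀ ≤ T := by
            by_contra hc; push_neg at hc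
            exact hj₀C (Finset.mem_filter.2 ⟨Finset.mem_univ j₀, hc⟩)
          exact combo_le' hη.le hw hsum Mv T hT hMvi hvJ j₀
            (Finset.mem_insert_of_mem hj₀J) hj₀T
    have hd := hbdd i hi _ d hsg
    have hd1 : -L ≤ d := by linarith [(abs_le.1 hd).1]
    have hαd : -(L * α (t+k)) ≤ α (t+k) * d := by
      nlinarith [mul_nonneg (hα0 (t+k)) (by linarith : (0:ℝ) ≤ d + L)]
    rw [hupd]; linarith
  have hstepLT : ∀ k (i : V), i ∈ (Aᶜ : Finset V) → ∀ mv T : ℝ, mv ≤ T →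
      mv ≤ x (t+k) i → (∀ j ∈ (Aᶜ : Finset V), mv ≤ x (t+k) j) →
      (T ≤ x (t+k) i ∨
        F+1 ≤ ((NIn E i) \ Finset.univ.filter (fun v => x (t+k) v < T)).card) →
      (1-η) * mv + η * T - L * α (t+k) ≤ x (t+k+1) i := by
    intro k i hi mv T hT hmvi hmvall hcase
    obtain ⟨J, a, d, hJ, hw, hsum, hsg, hupd⟩ := hdyn (t+k) i hi
    have hvJ : ∀ j ∈ J, mv ≤ x (t+k) j :=
      retained_ge hJ A hA mv hmvi (fun j _ hjA => hmvall j (Finset.mem_compl.2 hjA))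
    have hz : (1-η)*mv + η*T ≤ a i * x (t+k) i + ∑ j ∈ J, a j * x (t+k) j := by
      rcases le_or_gt T (x (t+k) i) with hle | hgt
      · exact combo_ge' hη.le hw hsum mv T hT hmvi hvJ i (Finset.mem_insert_self i J) hle
      · rcases hcase with hle | hreach
        · linarith
        · have hlt : ∀ j ∈ (NIn E i) \ Finset.univ.filter (fun v => x (t+k) v < T),
              x (t+k) i < x (t+k) j := by
            intro j hj
            rw [Finset.mem_sdiff] at hj
            have hnot : ¬ x (t+k) j < T := fun hTj =>
              hj.2 (Finset.mem_filter.2 ⟨Finset.mem_univ j, hTj⟩)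
            exact lt_of_lt_of_le hgt (not_lt.1 hnot)
          obtain ⟨j₀, hj₀J, hj₀C⟩ := exists_retained_outside' hJ _ hreach hlt
          have hj₀T : T ≤ x (t+k) j₀ := by
            by_contra hc; push_neg at hc
            exact hj₀C (Finset.mem_filter.2 ⟨Finset.mem_univ j₀, hc⟩)
          exact combo_ge' hη.le hw hsum mv T hT hmvi hvJ j₀
            (Finset.mem_insert_of_mem hj₀J) hj₀T
    have hd := hbdd i hi _ d hsg
    have hd1 : d ≤ L := (abs_le.1 hd).2
    have hαd : α (t+k) * d ≤ L * α (t+k) := by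
      nlinarith [mul_nonneg (hα0 (t+k)) (by linarith : (0:ℝ) ≤ L - d)]
    rw [hupd]; linarith
  -- global bounds over the window
  have hboundU : ∀ k, ∀ i ∈ (Aᶜ : Finset V), x (t+k) i ≤ M0 + Δf k := by
    intro k
    induction k with
    | zero =>
      intro i hi
      have := Finset.le_sup' (x t) hi
      rw [← hM0] at this
      simpa [hΔzero] using this
    | succ k ih =>
      intro i hi
      have h := hstepU k i hi (M0 + Δf k) (ih i hi) ih
      rw [hΔsucc k]
      calc x (t+(k+1)) i = x (t+k+1) i := by rw [show t+(k+1) = t+k+1 by omega]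
        _ ≤ M0 + Δf k + L * α (t+k) := h
        _ = M0 + (Δf k + L * α (t+k)) := by ring
  have hboundL : ∀ k, ∀ i ∈ (Aᶜ : Finset V), m0 - Δf k ≤ x (t+k) i := by
    intro k
    induction k with
    | zero =>
      intro i hi
      have := Finset.inf'_le (x t) hi
      rw [← hm0] at this
      simpa [hΔzero] using this
    | succ k ih =>
      intro i hi
      have h := hstepL k i hi (m0 - Δf k) (ih i hi) ih
      rw [hΔsucc k]
      calc m0 - (Δf k + L * α (t+k)) = m0 - Δf k - L * α (t+k) := by ring
        _ ≤ x (t+k+1) i := h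
        _ = x (t+(k+1)) i := by rw [show t+(k+1) = t+k+1 by omega]
  have hΔn : Δf n = L * ∑ s ∈ Finset.Ico t (t + n), α s := by simp only [hΔf]
  have hsupb : (Aᶜ : Finset V).sup' hR (x (t+n)) ≤ M0 + Δf n :=
    Finset.sup'_le hR _ (fun i hi => hboundU n i hi)
  have hinfb : m0 - Δf n ≤ (Aᶜ : Finset V).inf' hR (x (t+n)) :=
    Finset.le_inf' hR _ (fun i hi => hboundL n i hi)
  by_cases hcase : η ^ n * ((M0 - m0)/2) ≤ Δf n
  · have hexp : (1 - η ^ n / 2) * (M0 - m0) = (M0 - m0) - η ^ n * ((M0 - m0)/2) := by ring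
    rw [← hΔn]
    linarith
  · push_neg at hcase
    have hηn : 0 < η ^ n := pow_pos hη n
    have hD0 : 0 < M0 - m0 := by
      rcases le_or_gt (M0 - m0) 0 with h | h
      · have : η ^ n * ((M0 - m0)/2) ≤ 0 :=
          mul_nonpos_of_nonneg_of_nonpos hηn.le (by linarith)
        linarith [hΔ0 n]
      · exact h
    set ε₀ := (M0 - m0)/2 with hε₀
    have hε₀pos : 0 < ε₀ := by rw [hε₀]; linarith
    set Tt : ℕ → ℝ := fun k => M0 + Δf n - η ^ k * ε₀ + Δf k with hTt
    set Bt : ℕ → ℝ := fun k => m0 - Δf n + η ^ k * ε₀ - Δf k with hBt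
    have hηk : ∀ k, k ≤ n → η ^ n ≤ η ^ k := fun k hk =>
      pow_le_pow_of_le_one hη.le hη1 hk
    have hηk1 : ∀ k : ℕ, η ^ k ≤ 1 := fun k => pow_le_one₀ hη.le hη1
    have hTle : ∀ k, k ≤ n → Tt k ≤ M0 + Δf n := by
      intro k hk; simp only [hTt]
      have h1 := mul_le_mul_of_nonneg_right (hηk k hk) hε₀pos.le
      have h2 := hΔmono hk
      linarith
    have hBge : ∀ k, k ≤ n → m0 - Δf n ≤ Bt k := by
      intro k hk; simp only [hBt]
      have h1 := mul_le_mul_of_nonneg_right (hηk k hk) hε₀pos.le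
      have h2 := hΔmono hk
      linarith
    have hTB : ∀ k, k ≤ n → Bt k ≤ Tt k := by
      intro k hk; simp only [hTt, hBt]
      have h1 := mul_le_mul_of_nonneg_right (hηk1 k) hε₀pos.le
      have h2 := hΔ0 k
      have h3 := hΔ0 n
      linarith
    set XM : ℕ → Finset V := fun k => Finset.univ.filter (fun v => Tt k < x (t+k) v)
      with hXM
    set Xm : ℕ → Finset V := fun k => Finset.univ.filter (fun v => x (t+k) v < Bt k)
      with hXm
    set RM : ℕ → Finset V := fun k => (Aᶜ : Finset V).filter (fun v => Tt k < x (t+k) v)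
      with hRM
    set Rm : ℕ → Finset V := fun k => (Aᶜ : Finset V).filter (fun v => x (t+k) v < Bt k)
      with hRm
    have hmemXM : ∀ k v, v ∈ XM k ↔ Tt k < x (t+k) v := by
      intro k v; simp [hXM]
    have hmemXm : ∀ k v, v ∈ Xm k ↔ x (t+k) v < Bt k := by
      intro k v; simp [hXm]
    have hmemRM : ∀ k v, v ∈ RM k ↔ v ∈ (Aᶜ : Finset V) ∧ Tt k < x (t+k) v := by
      intro k v; simp [hRM]
    have hmemRm : ∀ k v, v ∈ Rm k ↔ v ∈ (Aᶜ : Finset V) ∧ x (t+k) v < Bt k := by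
      intro k v; simp [hRm]
    have htop : ∀ k, k < n → ∀ i ∈ (Aᶜ : Finset V),
        (x (t+k) i ≤ Tt k ∨ F+1 ≤ ((NIn E i) \ XM k).card) →
        x (t+k+1) i ≤ Tt (k+1) := by
      intro k hk i hi hc
      have hb := hstepUT k i hi (M0 + Δf n) (Tt k) (hTle k hk.le)
        (le_trans (hboundU k i hi) (by linarith [hΔmono hk.le]))
        (fun j hj => le_trans (hboundU k j hj) (by linarith [hΔmono hk.le]))
        (by rw [hXM] at hc; exact hc)
      have hps : η ^ (k+1) = η ^ k * η := pow_succ η k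
      have hηΔ : η * Δf k ≤ Δf k := by nlinarith [hΔ0 k]
      simp only [hTt] at hb ⊢
      rw [hΔsucc k]
      nlinarith [hΔ0 k]
    have hbot : ∀ k, k < n → ∀ i ∈ (Aᶜ : Finset V),
        (Bt k ≤ x (t+k) i ∨ F+1 ≤ ((NIn E i) \ Xm k).card) →
        Bt (k+1) ≤ x (t+k+1) i := by
      intro k hk i hi hc
      have hb := hstepLT k i hi (m0 - Δf n) (Bt k) (hBge k hk.le)
        (le_trans (by linarith [hΔmono hk.le]) (hboundL k i hi))
        (fun j hj => le_trans (by linarith [hΔmono hk.le]) (hboundL k j hj))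
        (by rw [hXm] at hc; exact hc)
      have hps : η ^ (k+1) = η ^ k * η := pow_succ η k
      have hηΔ : η * Δf k ≤ Δf k := by nlinarith [hΔ0 k]
      simp only [hBt] at hb ⊢
      rw [hΔsucc k]
      nlinarith [hΔ0 k]
    have hmonoU : ∀ k, k < n → RM (k+1) ⊆ RM k := by
      intro k hk i hi
      rw [hmemRM] at hi
      obtain ⟨hiA, hilt⟩ := hi
      rw [hmemRM]
      refine ⟨hiA, ?_⟩
      by_contra hle; push_neg at hle
      have := htop k hk i hiA (Or.inl hle)
      rw [show t+(k+1) = t+k+1 by omega] at hilt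
      linarith
    have hmonoL : ∀ k, k < n → Rm (k+1) ⊆ Rm k := by
      intro k hk i hi
      rw [hmemRm] at hi
      obtain ⟨hiA, hilt⟩ := hi
      rw [hmemRm]
      refine ⟨hiA, ?_⟩
      by_contra hle; push_neg at hle
      have := hbot k hk i hiA (Or.inl hle)
      rw [show t+(k+1) = t+k+1 by omega] at hilt
      linarith
    have hdec : ∀ k, k < n → (RM k).Nonempty → (Rm k).Nonempty →
        (RM (k+1)).card + (Rm (k+1)).card + 1 ≤ (RM k).card + (Rm k).card := by
      intro k hk hMne hmne
      have hsubXM : RM k ⊆ XM k := by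
        intro v hv; rw [hmemRM] at hv; exact (hmemXM k v).2 hv.2
      have hsubXm : Rm k ⊆ Xm k := by
        intro v hv; rw [hmemRm] at hv; exact (hmemXm k v).2 hv.2
      have hXMne : (XM k).Nonempty := hMne.mono hsubXM
      have hXmne : (Xm k).Nonempty := hmne.mono hsubXm
      have hdisj : Disjoint (XM k) (Xm k) := by
        rw [Finset.disjoint_left]
        intro v hv1 hv2
        rw [hmemXM] at hv1; rw [hmemXm] at hv2
        linarith [hTB k hk.le]
      -- find a regular node that leaves its set
      have hleaver : (∃ v ∈ (Aᶜ : Finset V), v ∈ RM k ∧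
            F+1 ≤ ((NIn E v) \ XM k).card) ∨
          (∃ v ∈ (Aᶜ : Finset V), v ∈ Rm k ∧ F+1 ≤ ((NIn E v) \ Xm k).card) := by
        rcases hrobust (XM k) (Xm k) hXMne hXmne hdisj with hall1 | hall2 | hiii
        · obtain ⟨i₀, hi₀⟩ := hMne
          have hi₀A := ((hmemRM k i₀).1 hi₀).1
          have hre : F+1 ≤ ((NIn E i₀) \ XM k).card := by
            rw [← card_sdiff_classical]; exact hall1 i₀ (hsubXM hi₀)
          exact Or.inl ⟨i₀, hi₀A, hi₀, hre⟩
        · obtain ⟨i₀, hi₀⟩ := hmne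
          have hi₀A := ((hmemRm k i₀).1 hi₀).1
          have hre : F+1 ≤ ((NIn E i₀) \ Xm k).card := by
            rw [← card_sdiff_classical]; exact hall2 i₀ (hsubXm hi₀)
          exact Or.inr ⟨i₀, hi₀A, hi₀, hre⟩
        · obtain ⟨v, hvS, hvA'⟩ := exists_regular_mem A _ F hA hiii
          have hvA : v ∈ (Aᶜ : Finset V) := Finset.mem_compl.2 hvA'
          simp only [Finset.mem_union, Finset.mem_filter] at hvS
          rcases hvS with ⟨hvX, hre⟩ | ⟨hvX, hre⟩
          · have hreach : F+1 ≤ ((NIn E v) \ XM k).card := by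
              rw [← card_sdiff_classical]; exact hre
            exact Or.inl ⟨v, hvA, (hmemRM k v).2 ⟨hvA, (hmemXM k v).1 hvX⟩, hreach⟩
          · have hreach : F+1 ≤ ((NIn E v) \ Xm k).card := by
              rw [← card_sdiff_classical]; exact hre
            exact Or.inr ⟨v, hvA, (hmemRm k v).2 ⟨hvA, (hmemXm k v).1 hvX⟩, hreach⟩
      rcases hleaver with ⟨v, hvA, hvRM, hreach⟩ | ⟨v, hvA, hvRm, hreach⟩
      · have hout : v ∉ RM (k+1) := by
          rw [hmemRM]
          rintro ⟨-, h2⟩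
          have := htop k hk v hvA (Or.inr hreach)
          rw [show t+(k+1) = t+k+1 by omega] at h2
          linarith
        have h1 : (RM (k+1)).card < (RM k).card :=
          Finset.card_lt_card
            ((Finset.ssubset_iff_of_subset (hmonoU k hk)).2 ⟨v, hvRM, hout⟩)
        have h2 : (Rm (k+1)).card ≤ (Rm k).card := Finset.card_le_card (hmonoL k hk)
        omega
      · have hout : v ∉ Rm (k+1) := by
          rw [hmemRm]
          rintro ⟨-, h2⟩
          have := hbot k hk v hvA (Or.inr hreach)
          rw [show t+(k+1) = t+k+1 by omega] at h2
          linarith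
        have h1 : (Rm (k+1)).card < (Rm k).card :=
          Finset.card_lt_card
            ((Finset.ssubset_iff_of_subset (hmonoL k hk)).2 ⟨v, hvRm, hout⟩)
        have h2 : (RM (k+1)).card ≤ (RM k).card := Finset.card_le_card (hmonoU k hk)
        omega
    have hfin : RM n = ∅ ∨ Rm n = ∅ := by
      by_contra hcon
      push_neg at hcon
      obtain ⟨h1, h2⟩ := hcon
      have hne1 : (RM n).Nonempty := h1
      have hne2 : (Rm n).Nonempty := h2
      have hsubU : ∀ j, j ≤ n → ∀ k, k ≤ j → RM j ⊆ RM k := by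
        intro j
        induction j with
        | zero => intro _ k hk; rw [Nat.le_zero.1 hk]
        | succ j ih =>
          intro hj k hk
          rcases Nat.eq_or_lt_of_le hk with rfl | hlt
          · exact subset_rfl
          · exact le_trans (hmonoU j (by omega)) (ih (by omega) k (by omega))
      have hsubL : ∀ j, j ≤ n → ∀ k, k ≤ j → Rm j ⊆ Rm k := by
        intro j
        induction j with
        | zero => intro _ k hk; rw [Nat.le_zero.1 hk]
        | succ j ih =>
          intro hj k hk
          rcases Nat.eq_or_lt_of_le hk with rfl | hlt
          · exact subset_rfl
          · exact le_trans (hmonoL j (by omega)) (ih (by omega) k (by omega))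
      have hnonU : ∀ k, k ≤ n → (RM k).Nonempty :=
        fun k hk => hne1.mono (hsubU n le_rfl k hk)
      have hnonL : ∀ k, k ≤ n → (Rm k).Nonempty :=
        fun k hk => hne2.mono (hsubL n le_rfl k hk)
      have hdrop : ∀ k, k ≤ n → (RM k).card + (Rm k).card + k ≤
          (RM 0).card + (Rm 0).card := by
        intro k
        induction k with
        | zero => intro _; omega
        | succ k ih =>
          intro hk
          have h := hdec k (by omega) (hnonU k (by omega)) (hnonL k (by omega))
          have := ih (by omega)
          omega
      have hdisj0 : Disjoint (RM 0) (Rm 0) := by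
        rw [Finset.disjoint_left]
        intro v hv1 hv2
        rw [hmemRM] at hv1; rw [hmemRm] at hv2
        linarith [hTB 0 (Nat.zero_le n), hv1.2, hv2.2]
      have hcard0 : (RM 0).card + (Rm 0).card ≤ n := by
        rw [← Finset.card_union_of_disjoint hdisj0]
        have hsub : RM 0 ∪ Rm 0 ⊆ (Aᶜ : Finset V) := by
          intro v hv
          rcases Finset.mem_union.1 hv with h | h
          · exact ((hmemRM 0 v).1 h).1
          · exact ((hmemRm 0 v).1 h).1
        rw [hn]
        exact Finset.card_le_card hsub
      have hN1 : 1 ≤ (RM n).card := Finset.card_pos.2 hne1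
      have hN2 : 1 ≤ (Rm n).card := Finset.card_pos.2 hne2
      have := hdrop n le_rfl
      omega
    have hexp : (1 - η ^ n / 2) * (M0 - m0) = (M0 - m0) - η ^ n * ε₀ := by
      rw [hε₀]; ring
    rw [← hΔn]
    rcases hfin with hfin | hfin
    · have hallle : ∀ i ∈ (Aᶜ : Finset V), x (t+n) i ≤ Tt n := by
        intro i hi
        by_contra hgt; push_neg at hgt
        have : i ∈ RM n := (hmemRM n i).2 ⟨hi, hgt⟩
        rw [hfin] at this
        exact absurd this (Finset.notMem_empty i)
      have hsup2 : (Aᶜ : Finset V).sup' hR (x (t+n)) ≤ Tt n :=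
        Finset.sup'_le hR _ hallle
      simp only [hTt] at hsup2
      linarith
    · have hallge : ∀ i ∈ (Aᶜ : Finset V), Bt n ≤ x (t+n) i := by
        intro i hi
        by_contra hgt; push_neg at hgt
        have : i ∈ Rm n := (hmemRm n i).2 ⟨hi, hgt⟩
        rw [hfin] at this
        exact absurd this (Finset.notMem_empty i)
      have hinf2 : Bt n ≤ (Aᶜ : Finset V).inf' hR (x (t+n)) :=
        Finset.le_inf' hR _ hallge
      simp only [hBt] at hinf2
      linarith

/-- Consensus under `F`-total malicious adversaries: if the network is
`(F+1,F+1)`-robust and the step-sizes vanish, the regular nodes running the LF dynamics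
with parameter `F` reach consensus regardless of the adversaries' values, the initial
values, and the local functions. -/
theorem stmt15 {V : Type*} [Fintype V] [DecidableEq V] (F : ℕ) (η L : ℝ)
    (hη : 0 < η) (hL : 0 < L) (E : V → V → Prop)
    (hrobust : RSRobust E (F + 1) (F + 1))
    (A : Finset V) (hA : A.card ≤ F)
    (hR : (Aᶜ : Finset V).Nonempty)
    (f : V → ℝ → ℝ)
    (hconv : ∀ i ∈ (Aᶜ : Finset V), ConvexOn ℝ Set.univ (f i))
    (hbdd : ∀ i ∈ (Aᶜ : Finset V), HasBoundedSubgradients (f i) L)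
    (α : ℕ → ℝ) (hα0 : ∀ t, 0 ≤ α t) (hαlim : Tendsto α atTop (nhds 0))
    (x : ℕ → V → ℝ)
    (hdyn : LFMalicious E F η Aᶜ f α x) :
    Tendsto (fun t => (Aᶜ : Finset V).sup' hR (x t) - (Aᶜ : Finset V).inf' hR (x t))
      atTop (nhds 0) := by
  set n := (Aᶜ : Finset V).card with hn
  have hN : 0 < n := Finset.card_pos.2 hR
  have hη1 : η ≤ 1 := by
    obtain ⟨i₀, hi₀⟩ := hR
    obtain ⟨J, a, d, hJ, hw, hsum, hsg, hupd⟩ := hdyn 0 i₀ hi₀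
    have h1 : η ≤ a i₀ := hw i₀ (Finset.mem_insert_self i₀ J)
    have h2 : 0 ≤ ∑ j ∈ J, a j :=
      Finset.sum_nonneg fun j hj => le_trans hη.le (hw j (Finset.mem_insert_of_mem hj))
    linarith
  set D : ℕ → ℝ :=
    fun t => (Aᶜ : Finset V).sup' hR (x t) - (Aᶜ : Finset V).inf' hR (x t) with hD
  set e : ℕ → ℝ := fun t => 3 * (L * ∑ s ∈ Finset.Ico t (t + n), α s) with he
  have hD0 : ∀ t, 0 ≤ D t := by
    intro t; simp only [hD]
    obtain ⟨i₀, hi₀⟩ := hR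
    have h1 := Finset.inf'_le (x t) hi₀
    have h2 := Finset.le_sup' (x t) hi₀
    linarith
  have hrec : ∀ t, D (t + n) ≤ (1 - η ^ n / 2) * D t + e t := by
    intro t
    have h := contraction F η L hη hη1 hL E hrobust A hA hR f hbdd α hα0 x hdyn t
    simp only [hD, he]
    exact h
  have hc0 : (0:ℝ) ≤ 1 - η ^ n / 2 := by
    have := pow_le_one₀ hη.le hη1 (n := n); linarith
  have hc1 : 1 - η ^ n / 2 < 1 := by
    have := pow_pos hη n; linarith
  have hsum : ∀ t, (∑ s ∈ Finset.Ico t (t + n), α s) = ∑ i ∈ Finset.range n, α (t + i) := by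
    intro t; rw [Finset.sum_Ico_eq_sum_range]; simp
  have h1 : Tendsto (fun t => ∑ i ∈ Finset.range n, α (t + i)) atTop (nhds 0) := by
    have h := tendsto_finset_sum (Finset.range n)
      (fun i _ => hαlim.comp (tendsto_add_atTop_nat i))
    simpa using h
  have heten : Tendsto e atTop (nhds 0) := by
    have h2 := h1.const_mul (3 * L)
    rw [mul_zero] at h2
    apply h2.congr
    intro t
    simp only [he]
    rw [hsum t]; ring
  exact tendsto_of_contract hN hc0 hc1 hD0 hrec heten
end

section
/- Let F ∈ ℕ, η > 0, L > 0, and let G = (V, E) be a directed graph on a finite vertex set with adversarial set A ⊆ V and regular set R = V ∖ A. Suppose one of the following two conditions holds: (a) |A| ≤ F, the adversaries are malicious (broadcast model), and G is (F+1, F+1)-robust, with the regular nodes running the LF dynamics with parameter F in the malicious model; or (b) A is F-local, the adversaries are Byzantine, and G is (2F+1)-robust, with the regular nodes running the LF dynamics with parameter F in the Byzantine model. For each i ∈ R let f_i : ℝ → ℝ be convex and continuous with all subgradients bounded in magnitude by L, whose set of global minimizers M_i is nonempty and bounded. Define M̄ = max_{i∈R} max M_i and M̲ = min_{i∈R} min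 M_i. If the weights are lower bounded by η and the nonnegative step-sizes satisfy ∑_t α_t = ∞ and α_t → 0, then for every i ∈ R, limsup_{t→∞} x_i(t) ≤ M̄ and liminf_{t→∞} x_i(t) ≥ M̲, regardless of the actions of the adversarial nodes and the initial values. -/
open Filter
open scoped Classical

/-- The set of global minimizers of `f : ℝ → ℝ`. -/
def MinSet (f : ℝ → ℝ) : Set ℝ := {x | ∀ y, f x ≤ f y}

lemma evtl_le (M : ℕ → ℝ) (c : ℝ) (β : ℕ → ℝ) (hβ : ∀ t, 0 ≤ β t)
    (hdiv : Tendsto (fun T => ∑ t ∈ Finset.range T, β t) atTop atTop)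
    (T : ℕ) (hrec : ∀ t, T ≤ t → M (t + 1) ≤ max c (M t - β t)) :
    ∀ᶠ t in atTop, M t ≤ c := by
  have h1 : ∃ t₀, T ≤ t₀ ∧ M t₀ ≤ c := by
    by_contra h
    push_neg at h
    have hdecr : ∀ k, M (T + k) + ∑ s ∈ Finset.range k, β (T + s) ≤ M T := by
      intro k
      induction k with
      | zero => simp
      | succ k ih =>
        have h2 := hrec (T + k) (Nat.le_add_right _ _)
        have h3 : c < M (T + (k + 1)) := h _ (Nat.le_add_right _ _)
        have h4 : M (T + (k + 1)) ≤ M (T + k) - β (T + k) := by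
          rcases max_cases c (M (T + k) - β (T + k)) with ⟨he, _⟩ | ⟨he, _⟩
          · rw [← Nat.add_assoc] at h3 ⊢; rw [he] at h2; linarith
          · rw [← Nat.add_assoc] at h3 ⊢; rw [he] at h2; linarith
        rw [Finset.sum_range_succ]
        linarith
    have hd2 : Tendsto (fun k => ∑ s ∈ Finset.range k, β (T + s)) atTop atTop := by
      have h5 : ∀ k, ∑ s ∈ Finset.range k, β (T + s)
          = ∑ t ∈ Finset.range (T + k), β t + -∑ t ∈ Finset.range T, β t := by
        intro k
        rw [Finset.sum_range_add]
        ring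
      have hcomp : Tendsto (fun k => ∑ t ∈ Finset.range (T + k), β t) atTop atTop := by
        have := hdiv.comp (tendsto_add_atTop_nat T)
        exact this.congr (fun k => by show ∑ t ∈ Finset.range (k + T), β t = _; rw [Nat.add_comm])
      simp only [h5]
      exact tendsto_atTop_add_const_right atTop _ hcomp
    obtain ⟨k, hk⟩ := (hd2.eventually_ge_atTop (M T - c)).exists
    have := hdecr k
    have := h (T + k) (Nat.le_add_right _ _)
    linarith
  obtain ⟨t₀, ht₀T, ht₀⟩ := h1
  rw [eventually_atTop]
  refine ⟨t₀, fun t ht => ?_⟩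
  induction t, ht using Nat.le_induction with
  | base => exact ht₀
  | succ t ht ih =>
    have h2 := hrec t (le_trans ht₀T ht)
    have := hβ t
    rcases max_cases c (M t - β t) with ⟨he, _⟩ | ⟨he, _⟩ <;> rw [he] at h2 <;> linarith

lemma sup'_neg' {V : Type*} (R : Finset V) (hR : R.Nonempty) (v : V → ℝ) :
    R.sup' hR (fun j => -v j) = -R.inf' hR v := by
  apply le_antisymm
  · rw [Finset.sup'_le_iff]
    intro i hi
    have := Finset.inf'_le v hi
    linarith
  · rw [neg_le, Finset.le_inf'_iff]
    intro i hi
    have := Finset.le_sup' (fun j => -v j) hi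
    linarith

lemma retained_le_s17 {V : Type*} [Fintype V] [DecidableEq V] (F : ℕ) (N A : Finset V)
    (ξ : V → ℝ) (xi Mt : ℝ) (J : Finset V) (hJ : IsLFRetained F N ξ xi J)
    (hcard : (N ∩ A).card ≤ F ∨ A.card ≤ F)
    (hreg : ∀ v ∈ N, v ∉ A → ξ v ≤ Mt) (hxi : xi ≤ Mt) :
    ∀ j ∈ J, ξ j ≤ Mt := by
  obtain ⟨H, Lw, hJeq, hHsub, hHmax, hHle, hHgt, -, -, -, -⟩ := hJ
  intro j hj
  by_contra hgt
  push_neg at hgt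
  have hjN : j ∈ N := (Finset.mem_sdiff.1 (hJeq ▸ hj)).1
  have hjHL : j ∉ H ∪ Lw := (Finset.mem_sdiff.1 (hJeq ▸ hj)).2
  have hjH : j ∉ H := fun h => hjHL (Finset.mem_union_left _ h)
  have hjP : j ∈ N.filter (fun k => xi < ξ k) :=
    Finset.mem_filter.2 ⟨hjN, lt_of_le_of_lt hxi hgt⟩
  rcases le_or_gt (N.filter (fun k => xi < ξ k)).card F with hle | hlt
  · exact hjH ((hHle hle) ▸ hjP)
  · have hHcard : H.card = F := hHgt hlt
    have hHA : ∀ h ∈ H, h ∈ A := by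
      intro h hh
      by_contra hhA
      have hhN : h ∈ N := (Finset.mem_filter.1 (hHsub hh)).1
      have h1 : ξ j ≤ ξ h := hHmax h hh j (Finset.mem_sdiff.2 ⟨hjP, hjH⟩)
      have h2 : ξ h ≤ Mt := hreg h hhN hhA
      linarith
    have hjA : j ∈ A := by
      by_contra hjA
      exact absurd (hreg j hjN hjA) (not_le.2 hgt)
    have hsub : insert j H ⊆ N ∩ A := by
      intro v hv
      rcases Finset.mem_insert.1 hv with rfl | hv
      · exact Finset.mem_inter.2 ⟨hjN, hjA⟩
      · exact Finset.mem_inter.2 ⟨(Finset.mem_filter.1 (hHsub hv)).1, hHA v hv⟩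
    have hc1 : F + 1 = (insert j H).card := by
      rw [Finset.card_insert_of_notMem hjH, hHcard]
    have hc2 : (insert j H).card ≤ (N ∩ A).card := Finset.card_le_card hsub
    have hc3 : (N ∩ A).card ≤ F := by
      rcases hcard with h | h
      · exact h
      · exact le_trans (Finset.card_le_card (Finset.inter_subset_right)) h
    omega

lemma retained_neg {V : Type*} [Fintype V] [DecidableEq V] (F : ℕ) (N : Finset V)
    (ξ : V → ℝ) (xi : ℝ) (J : Finset V) (hJ : IsLFRetained F N ξ xi J) :
    IsLFRetained F N (fun j => -ξ j) (-xi) J := by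
  obtain ⟨H, Lw, hJeq, h1, h2, h3, h4, h5, h6, h7, h8⟩ := hJ
  have e1 : N.filter (fun j => -xi < -ξ j) = N.filter (fun j => ξ j < xi) :=
    Finset.filter_congr (fun k _ => by simp)
  have e2 : N.filter (fun j => (fun j => -ξ j) j < -xi) = N.filter (fun j => xi < ξ j) :=
    Finset.filter_congr (fun k _ => by simp)
  refine ⟨Lw, H, by rw [hJeq, Finset.union_comm], ?_, ?_, ?_, ?_, ?_, ?_, ?_, ?_⟩
  · rw [e1]; exact h5
  · rw [e1]; intro j hj k hk; have := h6 j hj k hk; simp only; linarith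
  · rw [e1]; exact h7
  · rw [e1]; exact h8
  · rw [e2]; exact h1
  · rw [e2]; intro j hj k hk; have := h2 j hj k hk; simp only; linarith
  · rw [e2]; exact h3
  · rw [e2]; exact h4

lemma core {V : Type*} [Fintype V] [DecidableEq V] (R : Finset V) (hR : R.Nonempty)
    (g : V → ℝ → ℝ) (L : ℝ)
    (hconv : ∀ i ∈ R, ConvexOn ℝ Set.univ (g i))
    (hmin : ∀ i ∈ R, (MinSet (g i)).Nonempty ∧ BddAbove (MinSet (g i)))
    (α : ℕ → ℝ) (hα0 : ∀ t, 0 ≤ α t)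
    (hαdiv : Tendsto (fun T => ∑ t ∈ Finset.range T, α t) atTop atTop)
    (hαlim : Tendsto α atTop (nhds 0))
    (y : ℕ → V → ℝ)
    (hstep : ∀ t, ∀ i ∈ R, ∃ z d, z ≤ R.sup' hR (y t) ∧ |d| ≤ L ∧
      IsSubgradient (g i) z d ∧ y (t + 1) i = z - α t * d)
    (ε : ℝ) (hε : 0 < ε) :
    ∀ᶠ t in atTop, R.sup' hR (y t) ≤ R.sup' hR (fun j => sSup (MinSet (g j))) + ε := by
  set c := R.sup' hR (fun j => sSup (MinSet (g j))) with hc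
  set μ : V → ℝ := fun i => if h : (MinSet (g i)).Nonempty then h.choose else 0 with hμ
  have hμmem : ∀ i ∈ R, μ i ∈ MinSet (g i) := by
    intro i hi
    have h := (hmin i hi).1
    simp only [hμ, dif_pos h]
    exact h.choose_spec
  have hμle : ∀ i ∈ R, μ i ≤ c := by
    intro i hi
    refine le_trans (le_csSup (hmin i hi).2 (hμmem i hi)) ?_
    rw [hc]
    exact Finset.le_sup' (fun j => sSup (MinSet (g j))) hi
  set z₀ := c + ε / 2 with hz₀
  have hz₀c : c < z₀ := by simp only [hz₀]; linarith
  have hgap : ∀ i ∈ R, g i (μ i) < g i z₀ := by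
    intro i hi
    have hle : g i (μ i) ≤ g i z₀ := hμmem i hi z₀
    rcases hle.lt_or_eq with h | h
    · exact h
    · exfalso
      have hzmin : z₀ ∈ MinSet (g i) := fun w => h ▸ hμmem i hi w
      have := le_trans (le_csSup (hmin i hi).2 hzmin) (Finset.le_sup' (fun j => sSup (MinSet (g j))) hi)
      rw [← hc] at this
      linarith
  set δ := R.inf' hR (fun i => (g i z₀ - g i (μ i)) / (z₀ - μ i)) with hδ
  have hδpos : 0 < δ := by
    rw [hδ, Finset.lt_inf'_iff]
    intro i hi
    exact div_pos (sub_pos.2 (hgap i hi)) (sub_pos.2 (lt_of_le_of_lt (hμle i hi) hz₀c))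
  have hkey : ∀ i ∈ R, ∀ z, z₀ ≤ z → ∀ d, IsSubgradient (g i) z d → δ ≤ d := by
    intro i hi z hz d hd
    have hm : μ i < z₀ := lt_of_le_of_lt (hμle i hi) hz₀c
    have hzm : (0:ℝ) < z - μ i := by linarith
    have H2 : g i z - g i (μ i) ≤ d * (z - μ i) := by
      have h' := hd (μ i)
      nlinarith [h']
    have Hc : g i z₀ * (z - μ i) ≤ (z - z₀) * g i (μ i) + (z₀ - μ i) * g i z := by
      rcases eq_or_lt_of_le hz with rfl | hzlt
      · nlinarith []
      · have ha : 0 ≤ (z - z₀) / (z - μ i) := div_nonneg (by linarith) hzm.le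
        have hb : 0 ≤ (z₀ - μ i) / (z - μ i) := div_nonneg (by linarith) hzm.le
        have hab : (z - z₀) / (z - μ i) + (z₀ - μ i) / (z - μ i) = 1 := by
          field_simp
          ring
        have hcomb := (hconv i hi).2 (Set.mem_univ (μ i)) (Set.mem_univ z) ha hb hab
        simp only [smul_eq_mul] at hcomb
        have hpt : (z - z₀) / (z - μ i) * μ i + (z₀ - μ i) / (z - μ i) * z = z₀ := by
          field_simp
          ring
        rw [hpt] at hcomb
        have h5 := mul_le_mul_of_nonneg_right hcomb hzm.le
        calc g i z₀ * (z - μ i)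
            ≤ ((z - z₀) / (z - μ i) * g i (μ i) + (z₀ - μ i) / (z - μ i) * g i z) * (z - μ i) := h5
          _ = (z - z₀) * g i (μ i) + (z₀ - μ i) * g i z := by field_simp
    have h3 : (g i z₀ - g i (μ i)) / (z₀ - μ i) ≤ d := by
      rw [div_le_iff₀ (by linarith : (0:ℝ) < z₀ - μ i)]
      have h4 : (g i z₀ - g i (μ i)) * (z - μ i) ≤ (d * (z₀ - μ i)) * (z - μ i) := by
        nlinarith [mul_le_mul_of_nonneg_left H2 (by linarith : (0:ℝ) ≤ z₀ - μ i)]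
      exact le_of_mul_le_mul_right h4 hzm
    exact le_trans (Finset.inf'_le _ hi) h3
  have hTα : ∀ᶠ t in atTop, α t * L ≤ ε / 2 := by
    have h6 : Tendsto (fun t => α t * L) atTop (nhds 0) := by
      simpa using hαlim.mul_const L
    exact h6.eventually (eventually_le_nhds (half_pos hε))
  obtain ⟨T, hT⟩ := eventually_atTop.1 hTα
  have hrec : ∀ t, T ≤ t →
      R.sup' hR (y (t + 1)) ≤ max (c + ε) (R.sup' hR (y t) - α t * δ) := by
    intro t ht
    rw [Finset.sup'_le_iff]
    intro i hi
    obtain ⟨z, d, hzle, hdL, hsg, hupd⟩ := hstep t i hi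
    rcases le_total z z₀ with hzc | hzc
    · refine le_max_of_le_left ?_
      rw [hupd]
      have h1 : -d ≤ L := by have := abs_le.1 hdL; linarith
      have h2 : α t * (-d) ≤ α t * L := mul_le_mul_of_nonneg_left h1 (hα0 t)
      have h7 := hT t ht
      simp only [hz₀] at hzc
      linarith
    · refine le_max_of_le_right ?_
      rw [hupd]
      have hd' : δ ≤ d := hkey i hi z hzc d hsg
      have h3 : α t * δ ≤ α t * d := mul_le_mul_of_nonneg_left hd' (hα0 t)
      linarith
  refine evtl_le _ (c + ε) (fun t => α t * δ) (fun t => mul_nonneg (hα0 t) hδpos.le) ?_ T hrec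
  simp only [← Finset.sum_mul]
  exact hαdiv.atTop_mul_const hδpos

lemma retained_ge_s17 {V : Type*} [Fintype V] [DecidableEq V] (F : ℕ) (N A : Finset V)
    (ξ : V → ℝ) (xi mt : ℝ) (J : Finset V) (hJ : IsLFRetained F N ξ xi J)
    (hcard : (N ∩ A).card ≤ F ∨ A.card ≤ F)
    (hreg : ∀ v ∈ N, v ∉ A → mt ≤ ξ v) (hxi : mt ≤ xi) :
    ∀ j ∈ J, mt ≤ ξ j := by
  have h := retained_le_s17 F N A (fun j => -ξ j) (-xi) (-mt) J (retained_neg F N ξ xi J hJ)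
    hcard (fun v hv hva => neg_le_neg (hreg v hv hva)) (neg_le_neg hxi)
  intro j hj
  have := h j hj
  linarith

lemma combo_le_s17 {V : Type*} [DecidableEq V] (J : Finset V) (i : V) (a ξv : V → ℝ)
    (xi Mt : ℝ) (ha : ∀ j ∈ insert i J, 0 ≤ a j) (hsum : a i + ∑ j ∈ J, a j = 1)
    (hxi : xi ≤ Mt) (hv : ∀ j ∈ J, ξv j ≤ Mt) :
    a i * xi + ∑ j ∈ J, a j * ξv j ≤ Mt := by
  calc a i * xi + ∑ j ∈ J, a j * ξv j
      ≤ a i * Mt + ∑ j ∈ J, a j * Mt := by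
        refine add_le_add (mul_le_mul_of_nonneg_left hxi (ha i (Finset.mem_insert_self i J))) ?_
        exact Finset.sum_le_sum fun j hj =>
          mul_le_mul_of_nonneg_left (hv j hj) (ha j (Finset.mem_insert_of_mem hj))
    _ = (a i + ∑ j ∈ J, a j) * Mt := by rw [← Finset.sum_mul, add_mul]
    _ = Mt := by rw [hsum, one_mul]

lemma combo_ge_s17 {V : Type*} [DecidableEq V] (J : Finset V) (i : V) (a ξv : V → ℝ)
    (xi mt : ℝ) (ha : ∀ j ∈ insert i J, 0 ≤ a j) (hsum : a i + ∑ j ∈ J, a j = 1)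
    (hxi : mt ≤ xi) (hv : ∀ j ∈ J, mt ≤ ξv j) :
    mt ≤ a i * xi + ∑ j ∈ J, a j * ξv j := by
  have h := combo_le_s17 J i a (fun j => -ξv j) (-xi) (-mt) ha hsum (neg_le_neg hxi)
    (fun j hj => neg_le_neg (hv j hj))
  have he : a i * (-xi) + ∑ j ∈ J, a j * (-ξv j) = -(a i * xi + ∑ j ∈ J, a j * ξv j) := by
    rw [neg_add, ← Finset.sum_neg_distrib]
    congr 1
    · ring
    · exact Finset.sum_congr rfl fun j _ => by ring
  rw [he] at h
  linarith

/-- Safety guarantee: under either (a) `F`-total malicious adversaries in an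
`(F+1,F+1)`-robust network with the malicious-model LF dynamics, or (b) `F`-local
Byzantine adversaries in a `(2F+1)`-robust network with the Byzantine-model LF dynamics,
if every regular node's convex continuous function has subgradients bounded by `L` and a
nonempty bounded set of minimizers, the weights are lower bounded by `η`, and the
nonnegative step-sizes satisfy `∑ α_t = ∞` and `α_t → 0`, then every regular state
asymptotically stays within the convex hull of the regular local minimizers:
`limsup x_i(t) ≤ M̄` and `liminf x_i(t) ≥ M̲`. -/
theorem stmt17 {V : Type*} [Fintype V] [DecidableEq V] (F : ℕ) (η L : ℝ)
    (hη : 0 < η) (hL : 0 < L) (E : V → V → Prop)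
    (A : Finset V) (hR : (Aᶜ : Finset V).Nonempty)
    (f : V → ℝ → ℝ)
    (hconv : ∀ i ∈ (Aᶜ : Finset V), ConvexOn ℝ Set.univ (f i))
    (hcont : ∀ i ∈ (Aᶜ : Finset V), Continuous (f i))
    (hbdd : ∀ i ∈ (Aᶜ : Finset V), HasBoundedSubgradients (f i) L)
    (hmin : ∀ i ∈ (Aᶜ : Finset V),
      (MinSet (f i)).Nonempty ∧ BddAbove (MinSet (f i)) ∧ BddBelow (MinSet (f i)))
    (α : ℕ → ℝ) (hα0 : ∀ t, 0 ≤ α t)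
    (hαdiv : Tendsto (fun T => ∑ t ∈ Finset.range T, α t) atTop atTop)
    (hαlim : Tendsto α atTop (nhds 0))
    (x : ℕ → V → ℝ)
    (hcase :
      (A.card ≤ F ∧ RSRobust E (F + 1) (F + 1) ∧ LFMalicious E F η Aᶜ f α x) ∨
      ((∀ v ∉ A, ((NIn E v) ∩ A).card ≤ F) ∧ RRobust E (2 * F + 1) ∧
        ∃ χ : ℕ → V → V → ℝ, LFByzantine E F η Aᶜ f α x χ)) :
    ∀ i ∈ (Aᶜ : Finset V),
      Filter.limsup (fun t => x t i) atTop ≤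
        (Aᶜ : Finset V).sup' hR (fun j => sSup (MinSet (f j))) ∧
      (Aᶜ : Finset V).inf' hR (fun j => sInf (MinSet (f j))) ≤
        Filter.liminf (fun t => x t i) atTop := by
  -- unified step property
  have hstep2 : ∀ t : ℕ, ∀ i ∈ (Aᶜ : Finset V), ∃ z d,
      ((Aᶜ : Finset V).inf' hR (x t) ≤ z ∧ z ≤ (Aᶜ : Finset V).sup' hR (x t)) ∧ |d| ≤ L ∧
      IsSubgradient (f i) z d ∧ x (t + 1) i = z - α t * d := by
    intro t i hi
    have hiA : i ∉ A := Finset.mem_compl.1 hi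
    obtain ⟨ξ, J, a, d, hJ, hcard, hξreg, ha, hsum, hsg, hupd⟩ :
        ∃ (ξ : V → ℝ) (J : Finset V) (a : V → ℝ) (d : ℝ),
          IsLFRetained F (NIn E i) ξ (x t i) J ∧
          ((NIn E i ∩ A).card ≤ F ∨ A.card ≤ F) ∧
          (∀ v ∈ NIn E i, v ∉ A → ξ v = x t v) ∧
          (∀ j ∈ insert i J, η ≤ a j) ∧
          a i + ∑ j ∈ J, a j = 1 ∧
          IsSubgradient (f i) (a i * x t i + ∑ j ∈ J, a j * ξ j) d ∧
          x (t + 1) i = (a i * x t i + ∑ j ∈ J, a j * ξ j) - α t * d := by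
      rcases hcase with ⟨hA, -, hLF⟩ | ⟨hlocal, -, χ, hχreg, hLF⟩
      · obtain ⟨J, a, d, h1, h2, h3, h4, h5⟩ := hLF t i hi
        exact ⟨x t, J, a, d, h1, Or.inr hA, fun v _ _ => rfl, h2, h3, h4, h5⟩
      · obtain ⟨J, a, d, h1, h2, h3, h4, h5⟩ := hLF t i hi
        exact ⟨χ t i, J, a, d, h1, Or.inl (hlocal i hiA),
          fun v _ hv => hχreg t i hi v (Finset.mem_compl.2 hv), h2, h3, h4, h5⟩
    have ha0 : ∀ j ∈ insert i J, 0 ≤ a j := fun j hj => le_trans hη.le (ha j hj)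
    have hxiu : x t i ≤ (Aᶜ : Finset V).sup' hR (x t) := Finset.le_sup' (x t) hi
    have hxil : (Aᶜ : Finset V).inf' hR (x t) ≤ x t i := Finset.inf'_le (x t) hi
    have hregu : ∀ v ∈ NIn E i, v ∉ A → ξ v ≤ (Aᶜ : Finset V).sup' hR (x t) := by
      intro v hv hvA
      rw [hξreg v hv hvA]
      exact Finset.le_sup' (x t) (Finset.mem_compl.2 hvA)
    have hregl : ∀ v ∈ NIn E i, v ∉ A → (Aᶜ : Finset V).inf' hR (x t) ≤ ξ v := by
      intro v hv hvA
      rw [hξreg v hv hvA]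
      exact Finset.inf'_le (x t) (Finset.mem_compl.2 hvA)
    have hJu := retained_le_s17 F (NIn E i) A ξ (x t i) _ J hJ hcard hregu hxiu
    have hJl := retained_ge_s17 F (NIn E i) A ξ (x t i) _ J hJ hcard hregl hxil
    refine ⟨a i * x t i + ∑ j ∈ J, a j * ξ j, d,
      ⟨combo_ge_s17 J i a ξ _ _ ha0 hsum hxil hJl, combo_le_s17 J i a ξ _ _ ha0 hsum hxiu hJu⟩,
      hbdd i hi _ d hsg, hsg, hupd⟩
  have hmin' : ∀ i ∈ (Aᶜ : Finset V), (MinSet (f i)).Nonempty ∧ BddAbove (MinSet (f i)) :=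
    fun i hi => ⟨(hmin i hi).1, (hmin i hi).2.1⟩
  -- upper eventual bound
  have hupper : ∀ ε : ℝ, 0 < ε → ∀ᶠ t in atTop, ∀ i ∈ (Aᶜ : Finset V),
      x t i ≤ (Aᶜ : Finset V).sup' hR (fun j => sSup (MinSet (f j))) + ε := by
    intro ε hε
    have hstepU : ∀ t : ℕ, ∀ i ∈ (Aᶜ : Finset V), ∃ z d,
        z ≤ (Aᶜ : Finset V).sup' hR (x t) ∧ |d| ≤ L ∧
        IsSubgradient (f i) z d ∧ x (t + 1) i = z - α t * d := by
      intro t j hj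
      obtain ⟨z, d, ⟨h1, h2⟩, h3, h4, h5⟩ := hstep2 t j hj
      exact ⟨z, d, h2, h3, h4, h5⟩
    filter_upwards [core (Aᶜ : Finset V) hR f L hconv hmin' α hα0 hαdiv hαlim x hstepU ε hε]
      with t ht i hi
    exact le_trans (Finset.le_sup' (x t) hi) ht
  -- lower eventual bound via negation
  set g' : V → ℝ → ℝ := fun j u => f j (-u) with hg'
  have hmemneg : ∀ j, ∀ u : ℝ, u ∈ MinSet (g' j) ↔ -u ∈ MinSet (f j) := by
    intro j u
    constructor
    · intro h w
      have := h (-w)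
      simpa [hg'] using this
    · intro h w
      exact h (-w)
  have hminneg : ∀ j, MinSet (g' j) = -(MinSet (f j)) := by
    intro j
    ext u
    rw [Set.mem_neg]
    exact hmemneg j u
  have hconv' : ∀ i ∈ (Aᶜ : Finset V), ConvexOn ℝ Set.univ (g' i) := by
    intro i hi
    refine ⟨convex_univ, ?_⟩
    intro p _ q _ a b ha hb hab
    have h := (hconv i hi).2 (Set.mem_univ (-p)) (Set.mem_univ (-q)) ha hb hab
    simp only [smul_eq_mul, hg'] at h ⊢
    have harg : a * -p + b * -q = -(a * p + b * q) := by ring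
    rw [harg] at h
    exact h
  have hmin'' : ∀ i ∈ (Aᶜ : Finset V), (MinSet (g' i)).Nonempty ∧ BddAbove (MinSet (g' i)) := by
    intro i hi
    obtain ⟨⟨m, hm⟩, -, ⟨b, hb⟩⟩ := hmin i hi
    constructor
    · exact ⟨-m, (hmemneg i (-m)).2 (by simpa using hm)⟩
    · refine ⟨-b, fun u hu => ?_⟩
      have := hb ((hmemneg i u).1 hu)
      linarith
  have hstepL : ∀ t : ℕ, ∀ i ∈ (Aᶜ : Finset V), ∃ z d,
      z ≤ (Aᶜ : Finset V).sup' hR (fun j => -(x t j)) ∧ |d| ≤ L ∧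
      IsSubgradient (g' i) z d ∧ -(x (t + 1) i) = z - α t * d := by
    intro t j hj
    obtain ⟨z, d, ⟨h1, h2⟩, h3, h4, h5⟩ := hstep2 t j hj
    refine ⟨-z, -d, ?_, by rwa [abs_neg], ?_, by rw [h5]; ring⟩
    · rw [sup'_neg' (Aᶜ : Finset V) hR (x t)]
      linarith
    · intro w
      have h9 := h4 (-w)
      simp only [hg', neg_neg]
      nlinarith [h9]
  have hlower : ∀ ε : ℝ, 0 < ε → ∀ᶠ t in atTop, ∀ i ∈ (Aᶜ : Finset V),
      (Aᶜ : Finset V).inf' hR (fun j => sInf (MinSet (f j))) - ε ≤ x t i := by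
    intro ε hε
    have hcore := core (Aᶜ : Finset V) hR g' L hconv' hmin'' α hα0 hαdiv hαlim
      (fun t j => -(x t j)) hstepL ε hε
    have hsupeq : (Aᶜ : Finset V).sup' hR (fun j => sSup (MinSet (g' j)))
        = -(Aᶜ : Finset V).inf' hR (fun j => sInf (MinSet (f j))) := by
      rw [← sup'_neg' (Aᶜ : Finset V) hR (fun j => sInf (MinSet (f j)))]
      refine Finset.sup'_congr hR rfl ?_
      intro j _
      rw [hminneg j, Real.sInf_def, neg_neg]
    rw [hsupeq] at hcore
    filter_upwards [hcore] with t ht i hi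
    have := le_trans (Finset.le_sup' (fun j => -(x t j)) hi) ht
    linarith
  -- conclusion
  intro i hi
  have hcbu : IsCoboundedUnder (· ≤ ·) atTop (fun t => x t i) := by
    refine isCoboundedUnder_le_of_eventually_le atTop (x := (Aᶜ : Finset V).inf' hR
      (fun j => sInf (MinSet (f j))) - 1) ?_
    filter_upwards [hlower 1 one_pos] with t ht
    exact ht i hi
  have hcbl : IsCoboundedUnder (· ≥ ·) atTop (fun t => x t i) := by
    refine isCoboundedUnder_ge_of_eventually_le atTop (x := (Aᶜ : Finset V).sup' hR
      (fun j => sSup (MinSet (f j))) + 1) ?_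
    filter_upwards [hupper 1 one_pos] with t ht
    exact ht i hi
  constructor
  · by_contra hcon
    push_neg at hcon
    set c := (Aᶜ : Finset V).sup' hR (fun j => sSup (MinSet (f j))) with hcdef
    have hε : 0 < (Filter.limsup (fun t => x t i) atTop - c) / 2 := by linarith
    have h := Filter.limsup_le_of_le hcbu (by
      filter_upwards [hupper _ hε] with t ht
      exact ht i hi)
    linarith
  · by_contra hcon
    push_neg at hcon
    set c := (Aᶜ : Finset V).inf' hR (fun j => sInf (MinSet (f j))) with hcdef
    have hε : 0 < (c - Filter.liminf (fun t => x t i) atTop) / 2 := by linarith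
    have h := Filter.le_liminf_of_le hcbl (by
      filter_upwards [hlower _ hε] with t ht
      exact le_of_le_of_eq (ht i hi) rfl)
    linarith
end
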